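/- Let d ≥ 1, σ > 2, δ ∈ (0,1/2] and θ₂ > 0. There exists a constant C₀ > 0, depending only on d, σ, δ and θ₂, such that for all t ≥ 0 and all k, ℓ ∈ ℤ^d ∖ {0}: ∫₀^t (t−s) e^{−(θ₂/2)|k|(t−s)/⟨t⟩^{δ}} · min{⟨ℓ,ℓs⟩, ⟨k−ℓ, kt−ℓs⟩}^{−σ} ds ≤ C₀ |k|^{−2}. -/

import Mathlib

open MeasureTheory
open scoped ENNReal

noncomputable section

/-- `ℝ^d` with the Euclidean norm. -/
abbrev Ed (d : ℕ) := EuclideanSpace ℝ (Fin d)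

/-- Embedding of `ℤ^d` into `ℝ^d`. -/
def toE {d : ℕ} (k : Fin d → ℤ) : Ed d := WithLp.toLp 2 (fun i => (k i : ℝ))

/-- Japanese bracket of a scalar: `⟨u⟩ = (1+u²)^{1/2}`. -/
def jap (u : ℝ) : ℝ := Real.sqrt (1 + u ^ 2)

/-- Japanese bracket of a vector: `⟨η⟩ = (1+|η|²)^{1/2}`. -/
def japV {d : ℕ} (η : Ed d) : ℝ := Real.sqrt (1 + ‖η‖ ^ 2)

/-- Joint bracket `⟨k,η⟩ = (1+|k|²+|η|²)^{1/2}`. -/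
def japKV {d : ℕ} (k : Fin d → ℤ) (η : Ed d) : ℝ := Real.sqrt (1 + ‖toE k‖ ^ 2 + ‖η‖ ^ 2)

/-- The analytic weight `A_{k,η}(z) = e^{z⟨k,η⟩} ⟨η⟩^σ`. -/
def wA (d : ℕ) (σ z : ℝ) (k : Fin d → ℤ) (η : Ed d) : ℝ :=
  Real.exp (z * japKV k η) * japV η ^ σ

lemma one_le_sqrt' {x : ℝ} (hx : 1 ≤ x) : 1 ≤ Real.sqrt x := by
  nlinarith [Real.sq_sqrt (by linarith : (0:ℝ) ≤ x), Real.sqrt_nonneg x]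

lemma one_le_jap (t : ℝ) : 1 ≤ jap t := one_le_sqrt' (by nlinarith [sq_nonneg t])

lemma mul_exp_neg_le {x : ℝ} (hx : 0 ≤ x) : x * Real.exp (-x) ≤ Real.exp (-(x/2)) := by
  have h2 : 1 + x/4 ≤ Real.exp (x/4) := by have := Real.add_one_le_exp (x/4); linarith
  have h1 : x ≤ Real.exp (x/2) := by
    have h3 : (1 + x/4)^2 ≤ (Real.exp (x/4))^2 := by nlinarith [Real.exp_pos (x/4)]
    have h4 : (Real.exp (x/4))^2 = Real.exp (x/2) := by
      rw [sq, ← Real.exp_add]; ring_nf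
    nlinarith [sq_nonneg (1 - x/4)]
  calc x * Real.exp (-x) ≤ Real.exp (x/2) * Real.exp (-x) :=
        mul_le_mul_of_nonneg_right h1 (Real.exp_pos _).le
    _ = Real.exp (-(x/2)) := by rw [← Real.exp_add]; ring_nf

lemma sq_div_four_le_exp {x : ℝ} (hx : 0 ≤ x) : x^2/4 ≤ Real.exp x := by
  have h2 : 1 + x/2 ≤ Real.exp (x/2) := by have := Real.add_one_le_exp (x/2); linarith
  have h4 : (Real.exp (x/2))^2 = Real.exp x := by rw [sq, ← Real.exp_add]; ring_nf
  nlinarith [Real.exp_pos (x/2)]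

lemma integral_exp_bound {c t : ℝ} (hc : 0 < c) (ht : 0 ≤ t) :
    ∫ s in (0:ℝ)..t, Real.exp (-(c*(t-s))) ≤ 1/c := by
  rw [intervalIntegral.integral_comp_sub_left (fun u => Real.exp (-(c*u))) t]
  simp only [sub_zero, sub_self]
  have hd : ∀ u ∈ Set.uIcc (0:ℝ) t, HasDerivAt (fun u => -(Real.exp (-(c*u))/c)) (Real.exp (-(c*u))) u := by
    intro u _
    have h1 : HasDerivAt (fun u : ℝ => -(c*u)) (-c) u := by
      simpa using (hasDerivAt_id u).const_mul (-c)
    have h4 := (h1.exp.div_const c).neg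
    refine h4.congr_deriv ?_
    rw [mul_neg, neg_div, neg_neg, mul_div_assoc, div_self hc.ne', mul_one]
  rw [intervalIntegral.integral_eq_sub_of_hasDerivAt hd
    (Continuous.intervalIntegrable (by continuity) _ _)]
  have h5 := Real.exp_pos (-(c*t))
  have h6 : Real.exp (-(c*0)) = 1 := by norm_num
  rw [h6]
  have h7 : -(Real.exp (-(c*t)) / c) - -(1/c) = (1 - Real.exp (-(c*t)))/c := by ring
  rw [h7]
  gcongr
  linarith

lemma main_bound {a t M : ℝ} (ha : 0 < a) (ht : 0 ≤ t) (hM : 0 ≤ M)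
    (g : ℝ → ℝ) (hgc : Continuous g) (hg0 : ∀ s, 0 ≤ g s)
    (hgM : ∀ s ∈ Set.Icc (0:ℝ) t, Real.exp (-(a*(t-s)/4)) * g s ≤ M) :
    ∫ s in (0:ℝ)..t, (t-s) * Real.exp (-(a*(t-s))) * g s ≤ 4*M/a^2 := by
  have key : ∀ s ∈ Set.Icc (0:ℝ) t,
      (t-s) * Real.exp (-(a*(t-s))) * g s ≤ (M/a) * Real.exp (-((a/4)*(t-s))) := by
    intro s hs
    have hts : 0 ≤ t - s := by linarith [hs.2]
    have hx : 0 ≤ a * (t-s) := by positivity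
    have h1 : (t-s) * Real.exp (-(a*(t-s))) ≤ (1/a) * Real.exp (-(a*(t-s)/2)) := by
      have := mul_exp_neg_le hx
      calc (t-s) * Real.exp (-(a*(t-s)))
          = (1/a) * (a*(t-s) * Real.exp (-(a*(t-s)))) := by field_simp
        _ ≤ (1/a) * Real.exp (-(a*(t-s)/2)) := by
            apply mul_le_mul_of_nonneg_left _ (by positivity)
            simpa using this
    have h2 : Real.exp (-(a*(t-s)/2)) = Real.exp (-(a*(t-s)/4)) * Real.exp (-(a*(t-s)/4)) := by
      rw [← Real.exp_add]; ring_nf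
    calc (t-s) * Real.exp (-(a*(t-s))) * g s
        ≤ (1/a) * Real.exp (-(a*(t-s)/2)) * g s :=
          mul_le_mul_of_nonneg_right h1 (hg0 s)
      _ = (1/a) * Real.exp (-(a*(t-s)/4)) * (Real.exp (-(a*(t-s)/4)) * g s) := by
          rw [h2]; ring
      _ ≤ (1/a) * Real.exp (-(a*(t-s)/4)) * M :=
          mul_le_mul_of_nonneg_left (hgM s hs) (by positivity)
      _ = (M/a) * Real.exp (-((a/4)*(t-s))) := by ring_nf
  have int1 : IntervalIntegrable (fun s => (t-s) * Real.exp (-(a*(t-s))) * g s)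
      MeasureTheory.volume 0 t := by
    apply Continuous.intervalIntegrable
    exact ((continuous_const.sub continuous_id).mul
      (((continuous_const.mul (continuous_const.sub continuous_id)).neg).rexp)).mul hgc
  have int2 : IntervalIntegrable (fun s => (M/a) * Real.exp (-((a/4)*(t-s))))
      MeasureTheory.volume 0 t := by
    apply Continuous.intervalIntegrable
    exact continuous_const.mul
      (((continuous_const.mul (continuous_const.sub continuous_id)).neg).rexp)
  calc ∫ s in (0:ℝ)..t, (t-s) * Real.exp (-(a*(t-s))) * g s
      ≤ ∫ s in (0:ℝ)..t, (M/a) * Real.exp (-((a/4)*(t-s))) :=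
        intervalIntegral.integral_mono_on ht int1 int2 key
    _ = (M/a) * ∫ s in (0:ℝ)..t, Real.exp (-((a/4)*(t-s))) := by
        rw [intervalIntegral.integral_const_mul]
    _ ≤ (M/a) * (1/(a/4)) := by
        apply mul_le_mul_of_nonneg_left (integral_exp_bound (by positivity) ht) (by positivity)
    _ = 4*M/a^2 := by field_simp

lemma jap_le_exp {θ₂ t x : ℝ} (hθ : 0 < θ₂) (ht : 0 ≤ t) (hx0 : 0 ≤ x)
    (hx : θ₂ * t / (24 * Real.sqrt (jap t)) ≤ x) :
    jap t ≤ (4 + 4608/θ₂^2) * Real.exp x := by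
  have hj1 : 1 ≤ jap t := one_le_jap t
  have hj0 : 0 < jap t := by linarith
  have hex : 1 ≤ Real.exp x := Real.one_le_exp hx0
  have hCC : (0:ℝ) ≤ 4608/θ₂^2 := by positivity
  rcases le_or_gt t 1 with h|h
  · have hsq : jap t ^ 2 = 1 + t^2 := Real.sq_sqrt (by positivity)
    have : jap t ≤ 2 := by nlinarith
    nlinarith [Real.exp_pos x]
  · set j := jap t with hjdef
    set r := Real.sqrt j with hrdef
    have hr2 : r^2 = j := Real.sq_sqrt hj0.le
    have hr1 : 1 ≤ r := one_le_sqrt' hj1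
    have hr0 : 0 < r := by linarith
    have hθt : θ₂ * t ≤ 24*(r*x) := by
      rw [div_le_iff₀ (by positivity)] at hx; nlinarith
    have hsq : (θ₂*t)^2 ≤ (24*(r*x))^2 := by
      apply pow_le_pow_left₀ (by positivity) hθt
    have hq := sq_div_four_le_exp hx0
    have hj2 : j^2 = 1 + t^2 := Real.sq_sqrt (by positivity)
    have hkey : θ₂^2 * t^2 ≤ 2304 * (j * Real.exp x) := by nlinarith
    have ht2 : (0:ℝ) ≤ t^2 - 1 := by nlinarith
    have hfin : θ₂^2*j*j ≤ (4608*Real.exp x)*j := by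
      nlinarith [mul_nonneg (sq_nonneg θ₂) ht2]
    have h9 : θ₂^2*j ≤ 4608*Real.exp x := le_of_mul_le_mul_right hfin hj0
    rw [add_mul]
    have h10 : j ≤ 4608/θ₂^2 * Real.exp x := by
      rw [div_mul_eq_mul_div, le_div_iff₀ (by positivity)]
      linarith [h9]
    nlinarith [Real.exp_pos x]

/-- Claim C1. -/
lemma jap_le_exp_mul {θ₂ a t s : ℝ} (hθ : 0 < θ₂) (ht : 0 ≤ t) (hs : s ∈ Set.Icc (0:ℝ) t)
    (ha : θ₂ / (2 * Real.sqrt (jap t)) ≤ a) (ha0 : 0 < a) :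
    jap t ≤ (4 + 4608/θ₂^2) * Real.exp (a*(t-s)/4) * (1+s^2) := by
  have hj1 : 1 ≤ jap t := one_le_jap t
  have hj0 : 0 < jap t := by linarith
  have hr1 : 1 ≤ Real.sqrt (jap t) := one_le_sqrt' hj1
  have hts : 0 ≤ t - s := by linarith [hs.2]
  have hs0 : 0 ≤ s := hs.1
  have hCC : (0:ℝ) ≤ 4608/θ₂^2 := by positivity
  have hex : 1 ≤ Real.exp (a*(t-s)/4) := Real.one_le_exp (by positivity)
  rcases le_or_gt s (t/2) with h|h
  · have hx : θ₂ * t / (24 * Real.sqrt (jap t)) ≤ a*(t-s)/4 := by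
      have h1 : θ₂ * t / (24 * Real.sqrt (jap t)) ≤ (θ₂ / (2 * Real.sqrt (jap t))) * t / 12 := by
        rw [div_mul_eq_mul_div, div_div]
        apply div_le_div_of_nonneg_left (by positivity) (by positivity) (by nlinarith)
      have h2 : (θ₂ / (2 * Real.sqrt (jap t))) * t / 12 ≤ a * t / 12 := by
        apply div_le_div_of_nonneg_right _ (by norm_num)
        exact mul_le_mul_of_nonneg_right ha ht
      have h3 : a * t / 12 ≤ a * (t-s)/4 := by nlinarith
      linarith
    have := jap_le_exp hθ ht (by positivity) hx
    have h4 : (4 + 4608/θ₂^2) * Real.exp (a*(t-s)/4) ≤ (4 + 4608/θ₂^2) * Real.exp (a*(t-s)/4) * (1+s^2) :=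
      le_mul_of_one_le_right (by positivity) (by nlinarith [sq_nonneg s])
    linarith
  · -- s > t/2 : jap t ≤ jap t ^2 = 1+t^2 ≤ 4(1+s^2)
    have hsq : jap t ^ 2 = 1 + t^2 := Real.sq_sqrt (by positivity)
    have h1 : jap t ≤ 4*(1+s^2) := by nlinarith
    have h2 : (4:ℝ)+4608/θ₂^2 ≤ (4+4608/θ₂^2)*Real.exp (a*(t-s)/4) :=
      le_mul_of_one_le_right (by positivity) hex
    nlinarith [mul_le_mul_of_nonneg_right h2 (by positivity : (0:ℝ) ≤ 1+s^2),
      mul_nonneg hCC (by positivity : (0:ℝ) ≤ 1+s^2)]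

lemma rpow_neg_two {x : ℝ} (hx : 0 ≤ x) : x ^ (-2:ℝ) = (x^2)⁻¹ := by
  rw [Real.rpow_neg hx, ← Real.rpow_natCast x 2]
  norm_num

lemma rpow_neg_le_aux {A s σ : ℝ} (hσ : 2 ≤ σ) (hA : Real.sqrt (1+s^2) ≤ A) :
    A ^ (-σ) ≤ (1+s^2)⁻¹ := by
  have h1 : (1:ℝ) ≤ Real.sqrt (1+s^2) := by
    nlinarith [Real.sq_sqrt (by positivity : (0:ℝ) ≤ 1+s^2), Real.sqrt_nonneg (1+s^2), sq_nonneg s]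
  have h0 : (0:ℝ) < Real.sqrt (1+s^2) := by linarith
  have step1 : A ^ (-σ) ≤ Real.sqrt (1+s^2) ^ (-σ) :=
    Real.rpow_le_rpow_of_nonpos h0 hA (by linarith)
  have step2 : Real.sqrt (1+s^2) ^ (-σ) ≤ Real.sqrt (1+s^2) ^ (-2:ℝ) :=
    Real.rpow_le_rpow_of_exponent_le h1 (by linarith)
  have step3 : Real.sqrt (1+s^2) ^ (-2:ℝ) = (1+s^2)⁻¹ := by
    rw [rpow_neg_two (Real.sqrt_nonneg _), Real.sq_sqrt (by positivity : (0:ℝ) ≤ 1+s^2)]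
  linarith

lemma rpow_neg_le_aux2 {B s σ : ℝ} (hσ : 2 ≤ σ) (h1 : 1 ≤ B) (hB : Real.sqrt (1+s^2)/2 ≤ B) :
    B ^ (-σ) ≤ 4*(1+s^2)⁻¹ := by
  have hq0 : (0:ℝ) < Real.sqrt (1+s^2)/2 := by positivity
  have step1 : B ^ (-σ) ≤ B ^ (-2:ℝ) :=
    Real.rpow_le_rpow_of_exponent_le h1 (by linarith)
  have step2 : B ^ (-2:ℝ) ≤ (Real.sqrt (1+s^2)/2) ^ (-2:ℝ) :=
    Real.rpow_le_rpow_of_nonpos hq0 hB (by norm_num)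
  have step3 : (Real.sqrt (1+s^2)/2) ^ (-2:ℝ) = 4*(1+s^2)⁻¹ := by
    rw [rpow_neg_two (by positivity), div_pow,
      Real.sq_sqrt (by positivity : (0:ℝ) ≤ 1+s^2)]
    rw [show ((2:ℝ)^2) = 4 by norm_num, inv_div]
    ring
  linarith

lemma ftc_bound {K t : ℝ} (σ : ℝ) (hK : 1 ≤ K) (ht : 0 ≤ t) (hσ : 2 < σ) :
    ∫ u in (0:ℝ)..t, u * (1+K^2*u^2) ^ (-(σ/2)) ≤ 1/((σ-2)*K^2) := by
  have hK0 : (0:ℝ) < K := by linarith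
  set c : ℝ := 1 - σ/2 with hc
  have hc0 : c < 0 := by rw [hc]; linarith
  have hcne : c ≠ 0 := by linarith
  have hd : ∀ u ∈ Set.uIcc (0:ℝ) t,
      HasDerivAt (fun u => (1+K^2*u^2)^c / (2*c*K^2)) (u * (1+K^2*u^2) ^ (-(σ/2))) u := by
    intro u _
    have hbase : (0:ℝ) < 1+K^2*u^2 := by positivity
    have h1 : HasDerivAt (fun u : ℝ => 1+K^2*u^2) (K^2*(2*u)) u := by
      have := ((hasDerivAt_pow 2 u).const_mul (K^2)).const_add 1
      simpa using this
    have h2 := (h1.rpow_const (p := c) (Or.inl hbase.ne')).div_const (2*c*K^2)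
    refine h2.congr_deriv ?_
    have hexp : c - 1 = -(σ/2) := by rw [hc]; ring
    rw [← hexp]
    field_simp
  have hcont : Continuous (fun u : ℝ => u * (1+K^2*u^2) ^ (-(σ/2))) := by
    apply continuous_id.mul
    apply Continuous.rpow_const
    · continuity
    · intro x; left; positivity
  rw [intervalIntegral.integral_eq_sub_of_hasDerivAt hd (hcont.intervalIntegrable _ _)]
  have hb : (0:ℝ) < 1+K^2*t^2 := by positivity
  have h1r : (1:ℝ) + K^2*0^2 = 1 := by norm_num
  rw [h1r, Real.one_rpow]
  have hle1 : (1+K^2*t^2)^c ≤ 1 :=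
    Real.rpow_le_one_of_one_le_of_nonpos (by nlinarith) hc0.le
  have hge0 : (0:ℝ) ≤ (1+K^2*t^2)^c := Real.rpow_nonneg hb.le _
  have hden1 : 2*c*K^2 ≠ 0 := by
    have h' := mul_pos (neg_pos.mpr hc0) (pow_pos hK0 2)
    nlinarith
  have hden2 : (σ-2)*K^2 ≠ 0 := (mul_pos (by linarith) (pow_pos hK0 2)).ne'
  have heq : (1+K^2*t^2)^c / (2*c*K^2) - 1/(2*c*K^2)
      = (1 - (1+K^2*t^2)^c)/((σ-2)*K^2) := by
    rw [div_sub_div_same, div_eq_div_iff hden1 hden2, hc]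
    ring
  rw [heq]
  gcongr
  · nlinarith

lemma one_le_norm_toE {d : ℕ} {k : Fin d → ℤ} (hk : k ≠ 0) : 1 ≤ ‖toE k‖ := by
  obtain ⟨i, hi⟩ := Function.ne_iff.mp hk
  rw [EuclideanSpace.norm_eq]
  apply one_le_sqrt'
  have h1 : (1:ℝ) ≤ ‖toE k i‖^2 := by
    have h2 : (1:ℤ) ≤ |k i| := Int.one_le_abs (by simpa using hi)
    have h3 : (1:ℝ) ≤ |(k i : ℝ)| := by
      rw [← Int.cast_abs]; exact_mod_cast h2
    have : ‖toE k i‖ = |(k i : ℝ)| := by rw [show toE k i = ((k i : ℝ)) from rfl, Real.norm_eq_abs]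
    nlinarith
  calc (1:ℝ) ≤ ‖toE k i‖^2 := h1
    _ ≤ ∑ j, ‖toE k j‖^2 := Finset.single_le_sum (f := fun j => ‖toE k j‖^2) (fun j _ => sq_nonneg _) (Finset.mem_univ i)

lemma toE_sub {d : ℕ} (k ℓ : Fin d → ℤ) : toE (k - ℓ) = toE k - toE ℓ := by
  ext i
  simp [toE]

lemma one_le_japKV {d : ℕ} (k : Fin d → ℤ) (η : Ed d) : 1 ≤ japKV k η :=
  one_le_sqrt' (by nlinarith [sq_nonneg ‖toE k‖, sq_nonneg ‖η‖])

lemma sqrt_le_japKV {d : ℕ} {ℓ : Fin d → ℤ} (hℓ : ℓ ≠ 0) (s : ℝ) :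
    Real.sqrt (1 + s^2) ≤ japKV ℓ (s • toE ℓ) := by
  have hL : 1 ≤ ‖toE ℓ‖ := one_le_norm_toE hℓ
  apply Real.sqrt_le_sqrt
  have hn : ‖s • toE ℓ‖^2 = s^2 * ‖toE ℓ‖^2 := by
    rw [norm_smul, mul_pow, Real.norm_eq_abs, sq_abs]
  rw [hn]
  have hL2 : 1 ≤ ‖toE ℓ‖^2 := by nlinarith
  have h5 : s^2 ≤ s^2*‖toE ℓ‖^2 := le_mul_of_one_le_right (sq_nonneg s) hL2
  linarith

-- lower bound on ‖t•toE k - s•toE ℓ‖ in terms of s n - (t-s) K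
lemma norm_lower {d : ℕ} (k ℓ : Fin d → ℤ) {s t : ℝ} (hs : 0 ≤ s) (hts : s ≤ t) :
    s * ‖toE (k - ℓ)‖ - (t-s) * ‖toE k‖ ≤ ‖t • toE k - s • toE ℓ‖ := by
  have hid : t • toE k - s • toE ℓ = (t-s) • toE k + s • toE (k - ℓ) := by
    rw [toE_sub]
    module
  rw [hid]
  have h1 := norm_sub_norm_le (s • toE (k - ℓ)) (-((t-s) • toE k))
  have h2 : ‖s • toE (k-ℓ)‖ = s * ‖toE (k-ℓ)‖ := by
    rw [norm_smul, Real.norm_eq_abs, abs_of_nonneg hs]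
  have h3 : ‖-((t-s) • toE k)‖ = (t-s) * ‖toE k‖ := by
    rw [norm_neg, norm_smul, Real.norm_eq_abs, abs_of_nonneg (by linarith)]
  have h4 : s • toE (k-ℓ) - -((t-s) • toE k) = (t-s) • toE k + s • toE (k-ℓ) := by module
  rw [h2, h3, h4] at h1
  exact h1


set_option maxHeartbeats 1600000

/-- the key echo-suppression integral for Vlasov–Riesz systems:
`∫₀^t (t-s) e^{-(θ₂/2)|k|(t-s)/⟨t⟩^δ} min{⟨ℓ,ℓs⟩,⟨k-ℓ,kt-ℓs⟩}^{-σ} ds ≤ C₀|k|^{-2}`. -/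
theorem riesz_echo_integral_bound (d : ℕ) (hd : 1 ≤ d) (σ δ θ₂ : ℝ)
    (hσ : 2 < σ) (hδ0 : 0 < δ) (hδ1 : δ ≤ 1 / 2) (hθ : 0 < θ₂) :
    ∃ C₀ > (0:ℝ), ∀ t : ℝ, 0 ≤ t → ∀ k ℓ : Fin d → ℤ, k ≠ 0 → ℓ ≠ 0 →
      (∫ s in (0:ℝ)..t,
        (t - s) * Real.exp (-(θ₂ / 2) * ‖toE k‖ * (t - s) / jap t ^ δ) *
          min (japKV ℓ (s • toE ℓ)) (japKV (k - ℓ) (t • toE k - s • toE ℓ)) ^ (-σ)) ≤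
      C₀ * (‖toE k‖ ^ 2)⁻¹ := by
  have hσ2 : (0:ℝ) < σ - 2 := by linarith
  set CC : ℝ := 4 + 4608/θ₂^2 with hCCdef
  have hCC0 : (0:ℝ) < CC := by positivity
  refine ⟨80*CC/θ₂^2 + 1/(σ-2), by positivity, ?_⟩
  intro t ht k ℓ hk hℓ
  set K := ‖toE k‖ with hKdef
  have hK : 1 ≤ K := one_le_norm_toE hk
  have hK0 : 0 < K := by linarith
  have hj : 1 ≤ jap t := one_le_jap t
  have hj0 : 0 < jap t := by linarith
  set J := jap t ^ δ with hJdef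
  have hJ1 : 1 ≤ J := Real.one_le_rpow hj hδ0.le
  have hJ0 : 0 < J := by linarith
  have hJsqrt : J ≤ Real.sqrt (jap t) := by
    rw [Real.sqrt_eq_rpow]
    exact Real.rpow_le_rpow_of_exponent_le hj hδ1
  have hJ2 : J^2 ≤ jap t := by
    have h1 : J^2 = jap t ^ (δ*2) := by
      rw [hJdef, ← Real.rpow_natCast (jap t ^ δ) 2, ← Real.rpow_mul hj0.le]
      norm_num
    rw [h1]
    calc jap t ^ (δ*2) ≤ jap t ^ (1:ℝ) :=
          Real.rpow_le_rpow_of_exponent_le hj (by linarith)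
      _ = jap t := Real.rpow_one _
  set a := θ₂ * K / (2 * J) with hadef
  have ha0 : 0 < a := by positivity
  have hagt : θ₂ / (2 * Real.sqrt (jap t)) ≤ a := by
    rw [hadef]
    exact div_le_div₀ (by positivity) (le_mul_of_one_le_right hθ.le hK)
      (by positivity) (by linarith)
  -- the two profile functions
  set A : ℝ → ℝ := fun s => japKV ℓ (s • toE ℓ) with hAdef
  set Bf : ℝ → ℝ := fun s => japKV (k - ℓ) (t • toE k - s • toE ℓ) with hBdef
  have hA1 : ∀ s, 1 ≤ A s := fun s => one_le_japKV _ _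
  have hB1 : ∀ s, 1 ≤ Bf s := fun s => one_le_japKV _ _
  have contA : Continuous A := by
    apply Real.continuous_sqrt.comp
    exact continuous_const.add ((continuous_id.smul continuous_const).norm.pow 2)
  have contB : Continuous Bf := by
    apply Real.continuous_sqrt.comp
    exact continuous_const.add
      ((continuous_const.sub (continuous_id.smul continuous_const)).norm.pow 2)
  have contApow : Continuous fun s => A s ^ (-σ) :=
    contA.rpow_const (fun s => Or.inl (by linarith [hA1 s] : A s ≠ 0))
  have contBpow : Continuous fun s => Bf s ^ (-σ) :=
    contB.rpow_const (fun s => Or.inl (by linarith [hB1 s] : Bf s ≠ 0))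
  have contminpow : Continuous fun s => min (A s) (Bf s) ^ (-σ) :=
    (contA.min contB).rpow_const
      (fun s => Or.inl (by have := le_min (hA1 s) (hB1 s); linarith : min (A s) (Bf s) ≠ 0))
  have contexp : Continuous fun s : ℝ => Real.exp (-(a*(t-s))) :=
    ((continuous_const.mul (continuous_const.sub continuous_id)).neg).rexp
  have hmin : ∀ s : ℝ, min (A s) (Bf s) ^ (-σ) ≤ A s ^ (-σ) + Bf s ^ (-σ) := by
    intro s
    rcases min_choice (A s) (Bf s) with h|h <;> rw [h]
    · exact le_add_of_nonneg_right (Real.rpow_nonneg (by linarith [hB1 s]) _)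
    · exact le_add_of_nonneg_left (Real.rpow_nonneg (by linarith [hA1 s]) _)
  -- rewrite the exponential
  have hexp : ∀ s : ℝ, Real.exp (-(θ₂/2) * K * (t-s) / J) = Real.exp (-(a*(t-s))) := by
    intro s
    congr 1
    rw [hadef]
    field_simp
  have hrw : (∫ s in (0:ℝ)..t,
        (t - s) * Real.exp (-(θ₂ / 2) * K * (t - s) / J) *
          min (A s) (Bf s) ^ (-σ))
      = ∫ s in (0:ℝ)..t, (t-s) * Real.exp (-(a*(t-s))) * min (A s) (Bf s) ^ (-σ) := by
    apply intervalIntegral.integral_congr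
    intro s _
    simp only [hexp s]
  rw [hrw]
  -- integrability of the three integrands
  have intmin : IntervalIntegrable
      (fun s => (t-s) * Real.exp (-(a*(t-s))) * min (A s) (Bf s) ^ (-σ)) volume 0 t :=
    (((continuous_const.sub continuous_id).mul contexp).mul contminpow).intervalIntegrable _ _
  have intA : IntervalIntegrable
      (fun s => (t-s) * Real.exp (-(a*(t-s))) * A s ^ (-σ)) volume 0 t :=
    (((continuous_const.sub continuous_id).mul contexp).mul contApow).intervalIntegrable _ _
  have intB : IntervalIntegrable
      (fun s => (t-s) * Real.exp (-(a*(t-s))) * Bf s ^ (-σ)) volume 0 t :=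
    (((continuous_const.sub continuous_id).mul contexp).mul contBpow).intervalIntegrable _ _
  -- step 1 : split the min
  have step1 : (∫ s in (0:ℝ)..t, (t-s) * Real.exp (-(a*(t-s))) * min (A s) (Bf s) ^ (-σ))
      ≤ (∫ s in (0:ℝ)..t, (t-s) * Real.exp (-(a*(t-s))) * A s ^ (-σ))
        + ∫ s in (0:ℝ)..t, (t-s) * Real.exp (-(a*(t-s))) * Bf s ^ (-σ) := by
    rw [← intervalIntegral.integral_add intA intB]
    apply intervalIntegral.integral_mono_on ht intmin (intA.add intB)
    intro s hs
    have hts : 0 ≤ t - s := by linarith [hs.2]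
    have h1 : 0 ≤ (t-s) * Real.exp (-(a*(t-s))) := by positivity
    calc (t-s) * Real.exp (-(a*(t-s))) * min (A s) (Bf s) ^ (-σ)
        ≤ (t-s) * Real.exp (-(a*(t-s))) * (A s ^ (-σ) + Bf s ^ (-σ)) :=
          mul_le_mul_of_nonneg_left (hmin s) h1
      _ = (t-s) * Real.exp (-(a*(t-s))) * A s ^ (-σ)
          + (t-s) * Real.exp (-(a*(t-s))) * Bf s ^ (-σ) := by ring
  -- the core exponential-vs-bracket estimate
  have hcore : ∀ s ∈ Set.Icc (0:ℝ) t,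
      Real.exp (-(a*(t-s)/4)) * (1+s^2)⁻¹ ≤ CC/(jap t) := by
    intro s hs
    have h2 := jap_le_exp_mul hθ ht hs hagt ha0
    rw [Real.exp_neg, ← mul_inv, inv_eq_one_div,
      div_le_div_iff₀ (by positivity) hj0]
    nlinarith [h2]
  -- I_A bound
  have hIA : (∫ s in (0:ℝ)..t, (t-s) * Real.exp (-(a*(t-s))) * A s ^ (-σ))
      ≤ 4*(CC/(jap t))/a^2 := by
    apply main_bound ha0 ht (by positivity) _ contApow
      (fun s => Real.rpow_nonneg (by linarith [hA1 s]) _)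
    intro s hs
    have h1 : A s ^ (-σ) ≤ (1+s^2)⁻¹ := rpow_neg_le_aux hσ.le (sqrt_le_japKV hℓ s)
    calc Real.exp (-(a*(t-s)/4)) * A s ^ (-σ)
        ≤ Real.exp (-(a*(t-s)/4)) * (1+s^2)⁻¹ :=
          mul_le_mul_of_nonneg_left h1 (Real.exp_pos _).le
      _ ≤ CC/(jap t) := hcore s hs
  -- I_B bound, by cases
  have harith : ∀ M : ℝ, 0 ≤ M → 4*(M/(jap t))/a^2 ≤ 16*M/(θ₂^2*K^2) := by
    intro M hM
    rw [div_le_div_iff₀ (by positivity) (by positivity)]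
    have h1 : θ₂^2*K^2 = 4*a^2*J^2 := by rw [hadef]; field_simp; ring
    rw [h1]
    have h2 : M/(jap t)*J^2 ≤ M := by
      rw [div_mul_eq_mul_div, div_le_iff₀ hj0]
      exact mul_le_mul_of_nonneg_left hJ2 hM
    nlinarith [mul_le_mul_of_nonneg_right h2 (sq_nonneg a)]
  have hIA' : (∫ s in (0:ℝ)..t, (t-s) * Real.exp (-(a*(t-s))) * A s ^ (-σ))
      ≤ 16*CC/(θ₂^2*K^2) := hIA.trans (harith CC hCC0.le)
  by_cases hkl : k = ℓ
  · -- resonant case k = ℓ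
    subst hkl
    have hBeq : ∀ s : ℝ, Bf s = Real.sqrt (1 + K^2*(t-s)^2) := by
      intro s
      show japKV (k - k) (t • toE k - s • toE k) = _
      rw [sub_self]
      unfold japKV
      have h0 : toE (0 : Fin d → ℤ) = 0 := by ext i; simp [toE]
      rw [h0, norm_zero]
      have h1 : t • toE k - s • toE k = (t-s) • toE k := by module
      rw [h1, norm_smul, Real.norm_eq_abs]
      congr 1
      rw [mul_pow, sq_abs]
      ring
    have hIB : (∫ s in (0:ℝ)..t, (t-s) * Real.exp (-(a*(t-s))) * Bf s ^ (-σ))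
        ≤ 1/((σ-2)*K^2) := by
      have int2 : IntervalIntegrable
          (fun s => (t-s) * (1+K^2*(t-s)^2) ^ (-(σ/2))) volume 0 t := by
        apply Continuous.intervalIntegrable
        apply (continuous_const.sub continuous_id).mul
        apply Continuous.rpow_const
        · exact continuous_const.add
            (continuous_const.mul ((continuous_const.sub continuous_id).pow 2))
        · intro x; left; positivity
      calc (∫ s in (0:ℝ)..t, (t-s) * Real.exp (-(a*(t-s))) * Bf s ^ (-σ))
          ≤ ∫ s in (0:ℝ)..t, (t-s) * (1+K^2*(t-s)^2) ^ (-(σ/2)) := by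
            apply intervalIntegral.integral_mono_on ht intB int2
            intro s hs
            have hts : 0 ≤ t - s := by linarith [hs.2]
            have hbase : (0:ℝ) ≤ 1 + K^2*(t-s)^2 := by positivity
            have e1 : Bf s ^ (-σ) = (1+K^2*(t-s)^2) ^ (-(σ/2)) := by
              rw [hBeq s, Real.sqrt_eq_rpow, ← Real.rpow_mul hbase]
              congr 1
              ring
            rw [e1]
            have hE1 : Real.exp (-(a*(t-s))) ≤ 1 :=
              Real.exp_le_one_iff.mpr (by nlinarith)
            have hX0 : (0:ℝ) ≤ (1+K^2*(t-s)^2) ^ (-(σ/2)) := Real.rpow_nonneg hbase _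
            have := mul_le_of_le_one_right hts hE1
            exact mul_le_mul_of_nonneg_right this hX0
        _ = ∫ u in (0:ℝ)..t, u * (1+K^2*u^2) ^ (-(σ/2)) := by
            rw [intervalIntegral.integral_comp_sub_left
              (fun u => u * (1+K^2*u^2) ^ (-(σ/2))) t]
            simp only [sub_self, sub_zero]
        _ ≤ 1/((σ-2)*K^2) := ftc_bound σ hK ht hσ
    have hfin : 16*CC/(θ₂^2*K^2) + 1/((σ-2)*K^2)
        ≤ (80*CC/θ₂^2 + 1/(σ-2)) * (K^2)⁻¹ := by
      have e1 : 16*CC/(θ₂^2*K^2) = (16*CC/θ₂^2) * (K^2)⁻¹ := by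
        field_simp
      have e2 : 1/((σ-2)*K^2) = (1/(σ-2)) * (K^2)⁻¹ := by
        field_simp
      rw [e1, e2, add_mul]
      have h3 : (16*CC/θ₂^2) * (K^2)⁻¹ ≤ (80*CC/θ₂^2) * (K^2)⁻¹ := by
        apply mul_le_mul_of_nonneg_right _ (by positivity)
        rw [div_le_div_iff₀ (by positivity) (by positivity)]
        nlinarith [sq_nonneg θ₂]
      linarith
    linarith [step1, hIA', hIB, hfin]
  · -- non-resonant case k ≠ ℓ
    have hn : 1 ≤ ‖toE (k - ℓ)‖ := one_le_norm_toE (sub_ne_zero.mpr hkl)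
    have hIB : (∫ s in (0:ℝ)..t, (t-s) * Real.exp (-(a*(t-s))) * Bf s ^ (-σ))
        ≤ 4*(4*CC/(jap t))/a^2 := by
      apply main_bound ha0 ht (by positivity) _ contBpow
        (fun s => Real.rpow_nonneg (by linarith [hB1 s]) _)
      intro s hs
      have hs0 : 0 ≤ s := hs.1
      have hts : 0 ≤ t - s := by linarith [hs.2]
      rcases le_or_gt (s * ‖toE (k - ℓ)‖) (2*K*(t-s)) with hR|hR
      · -- far from resonance in time: exponential wins
        have hsn : s ≤ s * ‖toE (k-ℓ)‖ := le_mul_of_one_le_right hs0 hn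
        have h3K : t ≤ 3*K*(t-s) := by nlinarith
        have hx : θ₂ * t/(24*Real.sqrt (jap t)) ≤ a*(t-s)/4 := by
          have e1 : θ₂*t/(24*Real.sqrt (jap t)) ≤ θ₂*(3*K*(t-s))/(24*Real.sqrt (jap t)) := by
            gcongr
          have e2 : θ₂*(3*K*(t-s))/(24*Real.sqrt (jap t)) ≤ θ₂*(3*K*(t-s))/(24*J) := by
            gcongr
          have e3 : θ₂*(3*K*(t-s))/(24*J) = a*(t-s)/4 := by
            rw [hadef]; field_simp; ring
          linarith [e2.trans_eq e3]
        have hjx := jap_le_exp hθ ht (by positivity) hx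
        have hBle : Bf s ^ (-σ) ≤ 1 :=
          Real.rpow_le_one_of_one_le_of_nonpos (hB1 s) (by linarith)
        have h5 : Real.exp (-(a*(t-s)/4)) ≤ CC/(jap t) := by
          rw [Real.exp_neg, inv_eq_one_div, div_le_div_iff₀ (Real.exp_pos _) hj0]
          nlinarith [hjx]
        calc Real.exp (-(a*(t-s)/4)) * Bf s ^ (-σ)
            ≤ Real.exp (-(a*(t-s)/4)) * 1 :=
              mul_le_mul_of_nonneg_left hBle (Real.exp_pos _).le
          _ = Real.exp (-(a*(t-s)/4)) := by ring
          _ ≤ CC/(jap t) := h5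
          _ ≤ 4*CC/(jap t) := by
              rw [div_le_div_iff₀ hj0 hj0]
              nlinarith [mul_pos hCC0 hj0]
      · -- near resonance: B is large
        have hlow := norm_lower k ℓ hs0 hs.2
        have hw : s/2 ≤ ‖t • toE k - s • toE ℓ‖ := by nlinarith
        have hnrm : Real.sqrt (1+s^2)/2 ≤ Bf s := by
          show _ ≤ japKV (k-ℓ) (t • toE k - s • toE ℓ)
          unfold japKV
          have hx2 : (Real.sqrt (1+s^2)/2)^2 ≤ 1 + ‖toE (k-ℓ)‖^2 + ‖t • toE k - s • toE ℓ‖^2 := by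
            rw [div_pow, Real.sq_sqrt (by positivity : (0:ℝ) ≤ 1+s^2)]
            have hw2 : (s/2)^2 ≤ ‖t • toE k - s • toE ℓ‖^2 :=
              pow_le_pow_left₀ (by positivity) hw 2
            nlinarith [sq_nonneg ‖toE (k-ℓ)‖]
          have h9 := Real.sqrt_le_sqrt hx2
          rwa [Real.sqrt_sq (by positivity)] at h9
        have hB4 : Bf s ^ (-σ) ≤ 4*(1+s^2)⁻¹ := rpow_neg_le_aux2 hσ.le (hB1 s) hnrm
        calc Real.exp (-(a*(t-s)/4)) * Bf s ^ (-σ)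
            ≤ Real.exp (-(a*(t-s)/4)) * (4*(1+s^2)⁻¹) :=
              mul_le_mul_of_nonneg_left hB4 (Real.exp_pos _).le
          _ = 4*(Real.exp (-(a*(t-s)/4)) * (1+s^2)⁻¹) := by ring
          _ ≤ 4*(CC/(jap t)) := by linarith [hcore s hs]
          _ = 4*CC/(jap t) := by ring
    have hIB' : (∫ s in (0:ℝ)..t, (t-s) * Real.exp (-(a*(t-s))) * Bf s ^ (-σ))
        ≤ 16*(4*CC)/(θ₂^2*K^2) := by
      have e0 : 4*CC/(jap t) = (4*CC)/(jap t) := by ring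
      rw [e0] at hIB
      exact hIB.trans (harith (4*CC) (by positivity))
    have hfin : 16*CC/(θ₂^2*K^2) + 16*(4*CC)/(θ₂^2*K^2)
        ≤ (80*CC/θ₂^2 + 1/(σ-2)) * (K^2)⁻¹ := by
      have e1 : 16*CC/(θ₂^2*K^2) + 16*(4*CC)/(θ₂^2*K^2) = (80*CC/θ₂^2)*(K^2)⁻¹ := by
        field_simp
        ring
      rw [e1, add_mul]
      have h4 : 0 ≤ (1/(σ-2))*(K^2)⁻¹ := by positivity
      linarith
    linarith [step1, hIA', hIB', hfin]
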